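/- Let U₁ = k⟨x₁,x₂⟩/(f₁, f₂ + z) where f₁ = x₁²x₂ − x₂x₁² − x₂x₁x₂ + x₂²x₁, f₂ = x₁x₂² − x₂²x₁, and z = x₁x₂ − x₂x₁. Then the assignment x₁ ↦ −x₁ − x₂ − 1, x₂ ↦ −x₂ − 1 extends to a well-defined algebra automorphism of U₁. -/
import Mathlib

set_option maxHeartbeats 2000000


/-- The defining relations of `U₁ = k⟨x₁,x₂⟩/(f₁, f₂ + z)` where
`f₁ = x₁²x₂ − x₂x₁² − x₂x₁x₂ + x₂²x₁`, `f₂ = x₁x₂² − x₂²x₁` and `z = x₁x₂ − x₂x₁`. -/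
def u1Rel (k : Type*) [Field k] :
    FreeAlgebra k (Fin 2) → FreeAlgebra k (Fin 2) → Prop := fun u v =>
  (u = FreeAlgebra.ι k 0 * FreeAlgebra.ι k 0 * FreeAlgebra.ι k 1 -
        FreeAlgebra.ι k 1 * FreeAlgebra.ι k 0 * FreeAlgebra.ι k 0 -
        FreeAlgebra.ι k 1 * FreeAlgebra.ι k 0 * FreeAlgebra.ι k 1 +
        FreeAlgebra.ι k 1 * FreeAlgebra.ι k 1 * FreeAlgebra.ι k 0 ∧ v = 0) ∨
  (u = FreeAlgebra.ι k 0 * FreeAlgebra.ι k 1 * FreeAlgebra.ι k 1 -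
        FreeAlgebra.ι k 1 * FreeAlgebra.ι k 1 * FreeAlgebra.ι k 0 +
        (FreeAlgebra.ι k 0 * FreeAlgebra.ι k 1 - FreeAlgebra.ι k 1 * FreeAlgebra.ι k 0) ∧
    v = 0)

section Stmt19Aux

variable {k : Type*} [Field k]

/-- The algebra map from the free algebra determined by images of the two generators. -/
noncomputable def u1Gen (v0 v1 : RingQuot (u1Rel k)) :
    FreeAlgebra k (Fin 2) →ₐ[k] RingQuot (u1Rel k) :=
  FreeAlgebra.lift k (fun i => if i = 0 then v0 else v1)

lemma u1Gen_apply0 (v0 v1 : RingQuot (u1Rel k)) :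
    u1Gen v0 v1 (FreeAlgebra.ι k 0) = v0 := by simp [u1Gen]

lemma u1Gen_apply1 (v0 v1 : RingQuot (u1Rel k)) :
    u1Gen v0 v1 (FreeAlgebra.ι k 1) = v1 := by simp [u1Gen]

lemma u1Gen_preserves (v0 v1 : RingQuot (u1Rel k))
    (h1 : v0 * v0 * v1 - v1 * v0 * v0 - v1 * v0 * v1 + v1 * v1 * v0 = 0)
    (h2 : v0 * v1 * v1 - v1 * v1 * v0 + (v0 * v1 - v1 * v0) = 0) :
    ∀ u v, u1Rel k u v → u1Gen v0 v1 u = u1Gen v0 v1 v := by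
  rintro u v (⟨rfl, rfl⟩ | ⟨rfl, rfl⟩) <;>
    simpa [map_mul, map_sub, map_add, u1Gen_apply0, u1Gen_apply1] using ‹_›

end Stmt19Aux

section RingIdent

variable {R : Type*} [Ring R] (a b : R)

lemma stmt19_e1 :
    (-a - b - 1) * (-a - b - 1) * (-b - 1) - (-b - 1) * (-a - b - 1) * (-a - b - 1)
        - (-b - 1) * (-a - b - 1) * (-b - 1) + (-b - 1) * (-b - 1) * (-a - b - 1)
        = -(a * a * b - b * a * a - b * a * b + b * b * a)
          - (a * b * b - b * b * a + (a * b - b * a)) := by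
  simp only [sub_eq_add_neg, neg_add, mul_add, add_mul, neg_mul, mul_neg, neg_neg, mul_one,
    one_mul, mul_assoc]
  abel

lemma stmt19_e2 :
    (-a - b - 1) * (-b - 1) * (-b - 1) - (-b - 1) * (-b - 1) * (-a - b - 1)
        + ((-a - b - 1) * (-b - 1) - (-b - 1) * (-a - b - 1))
        = -(a * b * b - b * b * a + (a * b - b * a)) := by
  simp only [sub_eq_add_neg, neg_add, mul_add, add_mul, neg_mul, mul_neg, neg_neg, mul_one,
    one_mul, mul_assoc]
  abel

lemma stmt19_e3 :
    (-a + b) * (-a + b) * (-b - 1) - (-b - 1) * (-a + b) * (-a + b)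
        - (-b - 1) * (-a + b) * (-b - 1) + (-b - 1) * (-b - 1) * (-a + b)
        = -(a * a * b - b * a * a - b * a * b + b * b * a)
          + (a * b * b - b * b * a + (a * b - b * a)) := by
  simp only [sub_eq_add_neg, neg_add, mul_add, add_mul, neg_mul, mul_neg, neg_neg, mul_one,
    one_mul, mul_assoc]
  abel

lemma stmt19_e4 :
    (-a + b) * (-b - 1) * (-b - 1) - (-b - 1) * (-b - 1) * (-a + b)
        + ((-a + b) * (-b - 1) - (-b - 1) * (-a + b))
        = -(a * b * b - b * b * a + (a * b - b * a)) := by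
  simp only [sub_eq_add_neg, neg_add, mul_add, add_mul, neg_mul, mul_neg, neg_neg, mul_one,
    one_mul, mul_assoc]
  abel

end RingIdent

/-- in `U₁ = k⟨x₁,x₂⟩/(f₁, f₂ + z)`, the assignment
`x₁ ↦ −x₁ − x₂ − 1`, `x₂ ↦ −x₂ − 1` extends to an algebra automorphism. -/
theorem stmt19 (k : Type*) [Field k] [IsAlgClosed k] [CharZero k] :
    ∃ φ : RingQuot (u1Rel k) ≃ₐ[k] RingQuot (u1Rel k),
      φ (RingQuot.mkAlgHom k _ (FreeAlgebra.ι k 0)) =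
        -RingQuot.mkAlgHom k _ (FreeAlgebra.ι k 0) -
        RingQuot.mkAlgHom k _ (FreeAlgebra.ι k 1) -
        algebraMap k (RingQuot (u1Rel k)) 1 ∧
      φ (RingQuot.mkAlgHom k _ (FreeAlgebra.ι k 1)) =
        -RingQuot.mkAlgHom k _ (FreeAlgebra.ι k 1) - algebraMap k (RingQuot (u1Rel k)) 1 := by
  set a : RingQuot (u1Rel k) := RingQuot.mkAlgHom k _ (FreeAlgebra.ι k 0) with ha
  set b : RingQuot (u1Rel k) := RingQuot.mkAlgHom k _ (FreeAlgebra.ι k 1) with hb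
  clear_value a b
  have h1 : a * a * b - b * a * a - b * a * b + b * b * a = 0 := by
    have := RingQuot.mkAlgHom_rel k
      (show u1Rel k _ 0 from Or.inl ⟨rfl, rfl⟩)
    simpa [map_mul, map_sub, map_add, ← ha, ← hb] using this
  have h2 : a * b * b - b * b * a + (a * b - b * a) = 0 := by
    have := RingQuot.mkAlgHom_rel k
      (show u1Rel k _ 0 from Or.inr ⟨rfl, rfl⟩)
    simpa [map_mul, map_sub, map_add, ← ha, ← hb] using this
  -- forward map on generators
  have hφ1 : (-a - b - 1) * (-a - b - 1) * (-b - 1) - (-b - 1) * (-a - b - 1) * (-a - b - 1)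
      - (-b - 1) * (-a - b - 1) * (-b - 1) + (-b - 1) * (-b - 1) * (-a - b - 1) = 0 := by
    rw [stmt19_e1 a b, h1, h2]; simp
  have hφ2 : (-a - b - 1) * (-b - 1) * (-b - 1) - (-b - 1) * (-b - 1) * (-a - b - 1)
      + ((-a - b - 1) * (-b - 1) - (-b - 1) * (-a - b - 1)) = 0 := by
    rw [stmt19_e2 a b, h2]; simp
  -- inverse map on generators
  have hψ1 : (-a + b) * (-a + b) * (-b - 1) - (-b - 1) * (-a + b) * (-a + b)
      - (-b - 1) * (-a + b) * (-b - 1) + (-b - 1) * (-b - 1) * (-a + b) = 0 := by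
    rw [stmt19_e3 a b, h1, h2]; simp
  have hψ2 : (-a + b) * (-b - 1) * (-b - 1) - (-b - 1) * (-b - 1) * (-a + b)
      + ((-a + b) * (-b - 1) - (-b - 1) * (-a + b)) = 0 := by
    rw [stmt19_e4 a b, h2]; simp
  let F : RingQuot (u1Rel k) →ₐ[k] RingQuot (u1Rel k) :=
    RingQuot.liftAlgHom k ⟨u1Gen (-a - b - 1) (-b - 1),
      u1Gen_preserves _ _ hφ1 hφ2⟩
  let G : RingQuot (u1Rel k) →ₐ[k] RingQuot (u1Rel k) :=
    RingQuot.liftAlgHom k ⟨u1Gen (-a + b) (-b - 1),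
      u1Gen_preserves _ _ hψ1 hψ2⟩
  have hFa : F a = -a - b - 1 := by
    have h := (RingQuot.liftAlgHom_mkAlgHom_apply k _
      (u1Gen_preserves (-a - b - 1) (-b - 1) hφ1 hφ2) (FreeAlgebra.ι k 0)).trans
      (u1Gen_apply0 _ _)
    rwa [← ha] at h
  have hFb : F b = -b - 1 := by
    have h := (RingQuot.liftAlgHom_mkAlgHom_apply k _
      (u1Gen_preserves (-a - b - 1) (-b - 1) hφ1 hφ2) (FreeAlgebra.ι k 1)).trans
      (u1Gen_apply1 _ _)
    rwa [← hb] at h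
  have hGa : G a = -a + b := by
    have h := (RingQuot.liftAlgHom_mkAlgHom_apply k _
      (u1Gen_preserves (-a + b) (-b - 1) hψ1 hψ2) (FreeAlgebra.ι k 0)).trans
      (u1Gen_apply0 _ _)
    rwa [← ha] at h
  have hGb : G b = -b - 1 := by
    have h := (RingQuot.liftAlgHom_mkAlgHom_apply k _
      (u1Gen_preserves (-a + b) (-b - 1) hψ1 hψ2) (FreeAlgebra.ι k 1)).trans
      (u1Gen_apply1 _ _)
    rwa [← hb] at h
  have hFG : F.comp G = AlgHom.id k _ := by
    apply RingQuot.ringQuot_ext'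
    apply FreeAlgebra.hom_ext
    funext i
    fin_cases i
    · show F (G (RingQuot.mkAlgHom k _ (FreeAlgebra.ι k 0))) =
        RingQuot.mkAlgHom k _ (FreeAlgebra.ι k 0)
      rw [← ha, hGa, map_add, map_neg, hFa, hFb]; abel
    · show F (G (RingQuot.mkAlgHom k _ (FreeAlgebra.ι k 1))) =
        RingQuot.mkAlgHom k _ (FreeAlgebra.ι k 1)
      rw [← hb, hGb, map_sub, map_neg, map_one, hFb]; abel
  have hGF : G.comp F = AlgHom.id k _ := by
    apply RingQuot.ringQuot_ext'
    apply FreeAlgebra.hom_ext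
    funext i
    fin_cases i
    · show G (F (RingQuot.mkAlgHom k _ (FreeAlgebra.ι k 0))) =
        RingQuot.mkAlgHom k _ (FreeAlgebra.ι k 0)
      rw [← ha, hFa, map_sub, map_sub, map_neg, map_one, hGa, hGb]; abel
    · show G (F (RingQuot.mkAlgHom k _ (FreeAlgebra.ι k 1))) =
        RingQuot.mkAlgHom k _ (FreeAlgebra.ι k 1)
      rw [← hb, hFb, map_sub, map_neg, map_one, hGb]; abel
  refine ⟨AlgEquiv.ofAlgHom F G hFG hGF, ?_, ?_⟩
  · show F a = -a - b - algebraMap k (RingQuot (u1Rel k)) 1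
    rw [map_one]; exact hFa
  · show F b = -b - algebraMap k (RingQuot (u1Rel k)) 1
    rw [map_one]; exact hFb
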